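/- For every r > 0, the function h is differentiable at r with derivative h′(r) = −2·( ((3r−1)/r)·A₁(r) + r·A₂(r) ). -/

import Mathlib

open MeasureTheory Real Filter

/-- `u r z = √(z(1−rz)/(z+r))`, the real branch of `|w_r|` on `(0, 1/r)`. -/
noncomputable def u (r z : ℝ) : ℝ := Real.sqrt (z * (1 - r * z) / (z + r))

/-- The period function `h` of the candidate maximal Klein bottles. -/
noncomputable def h (r : ℝ) : ℝ :=
  ∫ z in (0:ℝ)..(1/r),
    -2 * u r z * (-1 + z + r * (2 - 3 * z + r * (-4 + 4 * r + 3 * z))) / (r + z)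

/-- `A₁ r = ∫₀^{1/r} u_r(z) dz`. -/
noncomputable def A₁ (r : ℝ) : ℝ := ∫ z in (0:ℝ)..(1/r), u r z

/-- `A₂ r = ∫₀^{1/r} u_r(z)/(z+r) dz`. -/
noncomputable def A₂ (r : ℝ) : ℝ := ∫ z in (0:ℝ)..(1/r), u r z / (z + r)

/-- `cc t = √(t(1-t))`. -/
noncomputable def cc (t : ℝ) : ℝ := Real.sqrt (t * (1 - t))

/-- `sg x t = √(t + x²)`. -/
noncomputable def sg (x t : ℝ) : ℝ := Real.sqrt (t + x^2)

def Qp (x t : ℝ) : ℝ := t - x + 2*x^2 - 3*x*t - 4*x^3 + 4*x^4 + 3*x^2*t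

def dQp (x t : ℝ) : ℝ := -1 + 4*x - 3*t - 12*x^2 + 16*x^3 + 6*x*t

noncomputable def Ff (x t : ℝ) : ℝ := -2 * cc t * Qp x t / (x * ((t + x^2) * sg x t))

noncomputable def Fp (x t : ℝ) : ℝ :=
  2 * cc t * (Qp x t * (t + 4*x^2) - dQp x t * (x * (t + x^2))) / (sg x t * (x^2 * (t + x^2)^2))

noncomputable def Tt (r t : ℝ) : ℝ := -2 * cc t * ((3*r-1)/r^2 + r/(t+r^2)) / sg r t

noncomputable def Ee (r t : ℝ) : ℝ :=
  cc t * t * ((4*(r-1)*(r^2+1)/r)/(t+r^2) + 4*(1-r)/r) / sg r t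

lemma sg_pos {x t : ℝ} (hx : 0 < x) (ht : 0 ≤ t) : 0 < sg x t :=
  Real.sqrt_pos.2 (by positivity)

lemma u_comp {x t : ℝ} (hx : 0 < x) (ht : 0 ≤ t) (ht1 : t ≤ 1) :
    u x (t/x) = cc t / sg x t := by
  have hx0 : x ≠ 0 := hx.ne'
  have hd : (0:ℝ) < t + x^2 := by positivity
  unfold u cc sg
  have h1 : 0 < t/x + x := by have := div_nonneg ht hx.le; linarith
  rw [show t/x * (1 - x * (t/x)) / (t/x + x) = t * (1-t) / (t + x^2) by
    rw [div_eq_div_iff h1.ne' hd.ne']; field_simp]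
  rw [Real.sqrt_div (by nlinarith) ]

lemma h_eq {x : ℝ} (hx : 0 < x) : h x = ∫ t in (0:ℝ)..1, Ff x t := by
  have hx0 : x ≠ 0 := hx.ne'
  have key := intervalIntegral.integral_comp_div (a := (0:ℝ)) (b := 1)
    (f := fun z => -2 * u x z * (-1 + z + x * (2 - 3 * z + x * (-4 + 4 * x + 3 * z))) / (x + z))
    hx0
  rw [zero_div] at key
  have key2 : (∫ t in (0:ℝ)..1,
      -2 * u x (t/x) * (-1 + t/x + x * (2 - 3 * (t/x) + x * (-4 + 4 * x + 3 * (t/x)))) / (x + t/x))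
      = x • ∫ z in (0:ℝ)..1/x,
      -2 * u x z * (-1 + z + x * (2 - 3 * z + x * (-4 + 4 * x + 3 * z))) / (x + z) := key
  have congr1 : (∫ t in (0:ℝ)..1,
      -2 * u x (t/x) * (-1 + t/x + x * (2 - 3 * (t/x) + x * (-4 + 4 * x + 3 * (t/x)))) / (x + t/x))
      = ∫ t in (0:ℝ)..1, x * Ff x t := by
    apply intervalIntegral.integral_congr
    intro t htmem
    rw [Set.uIcc_of_le zero_le_one] at htmem
    obtain ⟨ht, ht1⟩ := htmem
    simp only
    rw [u_comp hx ht ht1]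
    have hs := (sg_pos hx ht).ne'
    have hd : (0:ℝ) < t + x^2 := by positivity
    have hxt : 0 < x + t / x := by have := div_nonneg ht hx.le; linarith
    unfold Ff Qp
    field_simp
    ring
  rw [congr1, intervalIntegral.integral_const_mul, smul_eq_mul] at key2
  unfold h
  exact (mul_left_cancel₀ hx0 key2).symm

lemma A₁_eq {x : ℝ} (hx : 0 < x) : A₁ x = x⁻¹ * ∫ t in (0:ℝ)..1, cc t / sg x t := by
  have hx0 : x ≠ 0 := hx.ne'
  have key := intervalIntegral.integral_comp_div (a := (0:ℝ)) (b := 1) (f := fun z => u x z) hx0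
  rw [zero_div] at key
  have key2 : (∫ t in (0:ℝ)..1, u x (t/x)) = x • ∫ z in (0:ℝ)..1/x, u x z := key
  have congr1 : (∫ t in (0:ℝ)..1, u x (t/x)) = ∫ t in (0:ℝ)..1, cc t / sg x t := by
    apply intervalIntegral.integral_congr
    intro t htmem
    rw [Set.uIcc_of_le zero_le_one] at htmem
    exact u_comp hx htmem.1 htmem.2
  rw [congr1, smul_eq_mul] at key2
  unfold A₁
  rw [key2, ← mul_assoc, inv_mul_cancel₀ hx0, one_mul]

lemma A₂_eq {x : ℝ} (hx : 0 < x) : A₂ x = ∫ t in (0:ℝ)..1, cc t / ((t + x^2) * sg x t) := by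
  have hx0 : x ≠ 0 := hx.ne'
  have key := intervalIntegral.integral_comp_div (a := (0:ℝ)) (b := 1)
    (f := fun z => u x z / (z + x)) hx0
  rw [zero_div] at key
  have key2 : (∫ t in (0:ℝ)..1, u x (t/x) / (t/x + x))
      = x • ∫ z in (0:ℝ)..1/x, u x z / (z + x) := key
  have congr1 : (∫ t in (0:ℝ)..1, u x (t/x) / (t/x + x))
      = ∫ t in (0:ℝ)..1, x * (cc t / ((t + x^2) * sg x t)) := by
    apply intervalIntegral.integral_congr
    intro t htmem
    rw [Set.uIcc_of_le zero_le_one] at htmem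
    obtain ⟨ht, ht1⟩ := htmem
    simp only
    rw [u_comp hx ht ht1]
    have hs := (sg_pos hx ht).ne'
    have hd : (0:ℝ) < t + x^2 := by positivity
    have hxt : 0 < t / x + x := by have := div_nonneg ht hx.le; linarith
    field_simp
  rw [congr1, intervalIntegral.integral_const_mul, smul_eq_mul] at key2
  unfold A₂
  exact (mul_left_cancel₀ hx0 key2).symm

lemma hasDerivAt_Qp (t x : ℝ) : HasDerivAt (fun y : ℝ => Qp y t) (dQp x t) x := by
  have H := ((((((hasDerivAt_id x).const_sub t).add ((hasDerivAt_pow 2 x).const_mul 2)).sub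
      (((hasDerivAt_id x).const_mul 3).mul_const t)).sub ((hasDerivAt_pow 3 x).const_mul 4)).add
      ((hasDerivAt_pow 4 x).const_mul 4)).add (((hasDerivAt_pow 2 x).const_mul 3).mul_const t)
  have H2 : HasDerivAt (fun y : ℝ => Qp y t) _ x :=
    H.congr_of_eventuallyEq (Filter.Eventually.of_forall fun y => by unfold Qp; simp only [id_eq, Pi.add_apply, Pi.sub_apply]; try ring)
  convert H2 using 1
  unfold dQp
  push_cast
  ring

lemma hasDerivAt_sg (t x : ℝ) (hd : 0 < t + x^2) :
    HasDerivAt (fun y : ℝ => sg y t) (2*x / (2 * sg x t)) x := by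
  have hin : HasDerivAt (fun y : ℝ => t + y^2) (2*x) x := by
    simpa using ((hasDerivAt_pow 2 x).const_add t)
  have := hin.sqrt hd.ne'
  unfold sg
  exact this

lemma hasDerivAt_Ff {t x : ℝ} (ht : 0 < t) (ht1 : t ≤ 1) (hx : 0 < x) :
    HasDerivAt (fun y => Ff y t) (Fp x t) x := by
  have hx0 : x ≠ 0 := hx.ne'
  have hd : (0:ℝ) < t + x^2 := by positivity
  have hs0 : sg x t ≠ 0 := (sg_pos hx ht.le).ne'
  have hQ := hasDerivAt_Qp t x
  have hS := hasDerivAt_sg t x hd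
  have hin : HasDerivAt (fun y : ℝ => t + y^2) (2*x) x := by
    simpa using ((hasDerivAt_pow 2 x).const_add t)
  have hN : HasDerivAt (fun y : ℝ => -2 * cc t * Qp y t) (-2 * cc t * dQp x t) x :=
    hQ.const_mul _
  have hDen : HasDerivAt (fun y : ℝ => y * ((t + y^2) * sg y t))
      (1 * ((t + x^2) * sg x t) + x * (2*x * sg x t + (t + x^2) * (2*x / (2 * sg x t)))) x :=
    (hasDerivAt_id x).mul (hin.mul hS)
  have hD0 : x * ((t + x^2) * sg x t) ≠ 0 := by positivity
  have hF := hN.div hDen hD0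
  have hF2 : HasDerivAt (fun y => Ff y t) _ x :=
    hF.congr_of_eventuallyEq (Filter.Eventually.of_forall fun y => by unfold Ff; rfl)
  convert hF2 using 1
  unfold Fp
  set s := sg x t with hsdef
  have hs2 : s^2 = t + x^2 := Real.sq_sqrt hd.le
  rw [← hs2]
  field_simp
  linear_combination (-(cc t * Qp x t)) * hs2

lemma contOn_Ff {x : ℝ} (hx : 0 < x) :
    ContinuousOn (fun t => Ff x t) (Set.Icc (0:ℝ) 1) := by
  unfold Ff cc sg Qp
  apply ContinuousOn.div
  · fun_prop
  · fun_prop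
  · intro t ht
    have ht0 : (0:ℝ) ≤ t := ht.1
    have h1 : (0:ℝ) < t + x^2 := by positivity
    have h2 : 0 < Real.sqrt (t + x^2) := Real.sqrt_pos.2 h1
    positivity

lemma contOn_Fp_slice {x : ℝ} (hx : 0 < x) :
    ContinuousOn (fun t => Fp x t) (Set.Icc (0:ℝ) 1) := by
  unfold Fp cc sg Qp dQp
  apply ContinuousOn.div
  · fun_prop
  · fun_prop
  · intro t ht
    have ht0 : (0:ℝ) ≤ t := ht.1
    have h1 : (0:ℝ) < t + x^2 := by positivity
    have h2 : 0 < Real.sqrt (t + x^2) := Real.sqrt_pos.2 h1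
    positivity

lemma contOn_Fp {r : ℝ} (hr : 0 < r) :
    ContinuousOn (fun p : ℝ × ℝ => Fp p.1 p.2)
      ((Set.Icc (r/2) (3*r/2)) ×ˢ (Set.Icc (0:ℝ) 1)) := by
  unfold Fp cc sg Qp dQp
  apply ContinuousOn.div
  · fun_prop
  · fun_prop
  · rintro ⟨a, b⟩ ⟨ha, hb⟩
    have ha0 : 0 < a := lt_of_lt_of_le (by positivity) ha.1
    have hb0 : (0:ℝ) ≤ b := hb.1
    have h1 : (0:ℝ) < b + a^2 := by positivity
    have h2 : 0 < Real.sqrt (b + a^2) := Real.sqrt_pos.2 h1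
    positivity

lemma main_deriv {r : ℝ} (hr : 0 < r) :
    HasDerivAt (fun x => ∫ t in (0:ℝ)..1, Ff x t) (∫ t in (0:ℝ)..1, Fp r t) r := by
  have hε : 0 < r/2 := by positivity
  obtain ⟨C, hC⟩ :=
    ((isCompact_Icc (a := r/2) (b := 3*r/2)).prod
      (isCompact_Icc (a := (0:ℝ)) (b := 1))).exists_bound_of_continuousOn (contOn_Fp hr)
  have huIoc : Set.uIoc (0:ℝ) 1 = Set.Ioc 0 1 := Set.uIoc_of_le zero_le_one
  have key := intervalIntegral.hasDerivAt_integral_of_dominated_loc_of_deriv_le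
    (μ := volume) (F := fun x t => Ff x t) (F' := fun x t => Fp x t) (x₀ := r) (a := (0:ℝ)) (b := 1)
    (s := Metric.ball r (r/2)) (bound := fun _ => C) (Metric.ball_mem_nhds r hε)
    (by
      filter_upwards [eventually_gt_nhds hr] with x hx
      exact ((contOn_Ff hx).mono (by rw [huIoc]; exact Set.Ioc_subset_Icc_self)).aestronglyMeasurable
        measurableSet_uIoc)
    (by
      apply ContinuousOn.intervalIntegrable
      rw [Set.uIcc_of_le zero_le_one]
      exact contOn_Ff hr)
    (((contOn_Fp_slice hr).mono (by rw [huIoc]; exact Set.Ioc_subset_Icc_self)).aestronglyMeasurable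
        measurableSet_uIoc)
    (by
      apply Filter.Eventually.of_forall
      intro t ht x hx
      apply hC (x, t)
      rw [huIoc] at ht
      have hx' : |x - r| < r/2 := by rwa [Metric.mem_ball, Real.dist_eq] at hx
      have h1 := abs_sub_lt_iff.1 hx'
      exact ⟨⟨by linarith [h1.1, h1.2], by linarith [h1.1, h1.2]⟩,
        ⟨le_of_lt ht.1, ht.2⟩⟩)
    intervalIntegrable_const
    (by
      apply Filter.Eventually.of_forall
      intro t ht x hx
      rw [huIoc] at ht
      have hx' : |x - r| < r/2 := by rwa [Metric.mem_ball, Real.dist_eq] at hx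
      have h1 := abs_sub_lt_iff.1 hx'
      exact hasDerivAt_Ff ht.1 ht.2 (by linarith [h1.1, h1.2]))
  exact key.2

lemma hasDerivAt_Ee {r t : ℝ} (hr : 0 < r) (ht : 0 < t) (ht1 : t < 1) :
    HasDerivAt (fun y => Ee r y) (Fp r t - Tt r t) t := by
  have hr0 : r ≠ 0 := hr.ne'
  have hd : (0:ℝ) < t + r^2 := by positivity
  have htt : (0:ℝ) < t * (1 - t) := by nlinarith
  have hccp : 0 < cc t := Real.sqrt_pos.2 htt
  have hsp : 0 < sg r t := sg_pos hr ht.le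
  have hc0 : cc t ≠ 0 := hccp.ne'
  have hs0 : sg r t ≠ 0 := hsp.ne'
  have hccd : HasDerivAt (fun y : ℝ => cc y) ((1*(1-t) + t*(-1)) / (2 * cc t)) t := by
    have hin : HasDerivAt (fun y : ℝ => y * (1 - y)) (1*(1-t) + t*(-1)) t := by
      simpa [Pi.mul_def] using (hasDerivAt_id t).mul ((hasDerivAt_id t).const_sub 1)
    have := hin.sqrt htt.ne'
    unfold cc
    convert this using 2
  have hsgd : HasDerivAt (fun y : ℝ => sg r y) (1 / (2 * sg r t)) t := by
    have hin : HasDerivAt (fun y : ℝ => y + r^2) 1 t := (hasDerivAt_id t).add_const (r^2)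
    have := hin.sqrt hd.ne'
    unfold sg
    exact this
  have hRd : HasDerivAt (fun y : ℝ => (4*(r-1)*(r^2+1)/r)/(y+r^2) + 4*(1-r)/r)
      ((0 * (t + r^2) - (4*(r-1)*(r^2+1)/r) * 1) / (t+r^2)^2) t :=
    ((hasDerivAt_const t (4*(r-1)*(r^2+1)/r)).div ((hasDerivAt_id t).add_const (r^2)) hd.ne').add_const _
  have hNum : HasDerivAt (fun y : ℝ => cc y * y * ((4*(r-1)*(r^2+1)/r)/(y+r^2) + 4*(1-r)/r))
      (((1*(1-t) + t*(-1)) / (2 * cc t) * t + cc t * 1) * ((4*(r-1)*(r^2+1)/r)/(t+r^2) + 4*(1-r)/r)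
        + cc t * t * ((0 * (t + r^2) - (4*(r-1)*(r^2+1)/r) * 1) / (t+r^2)^2)) t :=
    (hccd.mul (hasDerivAt_id t)).mul hRd
  have hE := hNum.div hsgd hs0
  have hE2 : HasDerivAt (fun y => Ee r y) _ t :=
    hE.congr_of_eventuallyEq (Filter.Eventually.of_forall fun y => by unfold Ee; rfl)
  convert hE2 using 1
  unfold Fp Tt Qp dQp
  set c := cc t with hcdef
  set s := sg r t with hsdef
  have hc2 : c^2 = t * (1 - t) := Real.sq_sqrt htt.le
  have hs2 : s^2 = t + r^2 := Real.sq_sqrt hd.le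
  rw [← hs2]
  field_simp
  ring_nf
  linear_combination ((4)*t^2 + (36)*r^2*t^1 + (-16)*r^1*t^1 + (-16)*r^3 + (32)*r^4 + (-12)*r^1*t^2 + (-76)*r^3*t^1 + (-64)*r^5 + (76)*r^4*t^1 + (64)*r^6 + (12)*r^2*t^2 + (-24)*s^2*r^2 + (12)*s^2*r^1 + (16)*s^2*r^1*t^1 + (60)*s^2*r^3 + (-72)*s^2*r^4 + (-28)*s^2*r^2*t^1 + (4)*s^4*r^1 + (-4)*s^4 + (8)*s^4*r^2) * hc2 + ((64)*r^4*t^2 + (20)*r^2*t^2 + (-64)*r^3*t^2 + (-4)*r^1*t^2 + (-16)*s^2*r^2*t^2 + (4)*s^2*r^1*t^2 + (-64)*r^4*t^1 + (-32)*r^2*t^1 + (64)*r^3*t^1 + (16)*r^1*t^1 + (12)*s^2*r^2*t^1 + (-12)*r^1*t^3 + (12)*r^2*t^3 + (4)*s^2*t^2 + (-4)*s^2*t^1 + (4)*t^3 + (-4)*t^2) * hs2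

lemma contOn_Tt {r : ℝ} (hr : 0 < r) :
    ContinuousOn (fun t => Tt r t) (Set.Icc (0:ℝ) 1) := by
  unfold Tt cc sg
  apply ContinuousOn.div
  · apply ContinuousOn.mul
    · fun_prop
    · apply ContinuousOn.add
      · fun_prop
      · apply ContinuousOn.div
        · fun_prop
        · fun_prop
        · intro t ht; have := ht.1; positivity
  · fun_prop
  · intro t ht
    have ht0 : (0:ℝ) ≤ t := ht.1
    have h1 : (0:ℝ) < t + r^2 := by positivity
    exact (Real.sqrt_pos.2 h1).ne'

lemma contOn_Ee {r : ℝ} (hr : 0 < r) :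
    ContinuousOn (fun t => Ee r t) (Set.Icc (0:ℝ) 1) := by
  unfold Ee cc sg
  apply ContinuousOn.div
  · apply ContinuousOn.mul
    · fun_prop
    · apply ContinuousOn.add
      · apply ContinuousOn.div
        · fun_prop
        · fun_prop
        · intro t ht; have := ht.1; positivity
      · fun_prop
  · fun_prop
  · intro t ht
    have ht0 : (0:ℝ) ≤ t := ht.1
    have h1 : (0:ℝ) < t + r^2 := by positivity
    exact (Real.sqrt_pos.2 h1).ne'

lemma contOn_g1 {r : ℝ} (hr : 0 < r) :
    ContinuousOn (fun t => cc t / sg r t) (Set.Icc (0:ℝ) 1) := by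
  unfold cc sg
  apply ContinuousOn.div
  · fun_prop
  · fun_prop
  · intro t ht
    have ht0 : (0:ℝ) ≤ t := ht.1
    have h1 : (0:ℝ) < t + r^2 := by positivity
    exact (Real.sqrt_pos.2 h1).ne'

lemma contOn_g2 {r : ℝ} (hr : 0 < r) :
    ContinuousOn (fun t => cc t / ((t + r^2) * sg r t)) (Set.Icc (0:ℝ) 1) := by
  unfold cc sg
  apply ContinuousOn.div
  · fun_prop
  · fun_prop
  · intro t ht
    have ht0 : (0:ℝ) ≤ t := ht.1
    have h1 : (0:ℝ) < t + r^2 := by positivity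
    have h2 : 0 < Real.sqrt (t + r^2) := Real.sqrt_pos.2 h1
    positivity

lemma int_diff_zero {r : ℝ} (hr : 0 < r) :
    (∫ t in (0:ℝ)..1, (Fp r t - Tt r t)) = 0 := by
  have key := intervalIntegral.integral_eq_sub_of_hasDeriv_right_of_le zero_le_one
    (contOn_Ee hr)
    (fun x hx => (hasDerivAt_Ee hr hx.1 hx.2).hasDerivWithinAt)
    (by
      apply ContinuousOn.intervalIntegrable
      rw [Set.uIcc_of_le zero_le_one]
      exact (contOn_Fp_slice hr).sub (contOn_Tt hr))
  rw [key]
  have h1 : Ee r 1 = 0 := by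
    unfold Ee cc
    norm_num
  have h0 : Ee r 0 = 0 := by
    unfold Ee
    ring
  rw [h1, h0]
  ring

lemma int_Tt {r : ℝ} (hr : 0 < r) :
    (∫ t in (0:ℝ)..1, Tt r t) = -2 * ((3*r-1)/r * A₁ r + r * A₂ r) := by
  have hr0 : r ≠ 0 := hr.ne'
  have congr1 : (∫ t in (0:ℝ)..1, Tt r t)
      = ∫ t in (0:ℝ)..1, ((-2*(3*r-1)/r^2) * (cc t / sg r t)
          + (-2*r) * (cc t / ((t + r^2) * sg r t))) := by
    apply intervalIntegral.integral_congr
    intro t htmem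
    rw [Set.uIcc_of_le zero_le_one] at htmem
    have ht0 : (0:ℝ) ≤ t := htmem.1
    have h1 : (0:ℝ) < t + r^2 := by positivity
    have hs0 : sg r t ≠ 0 := (sg_pos hr ht0).ne'
    unfold Tt
    field_simp
    ring
  rw [congr1]
  have i1 : IntervalIntegrable (fun t => (-2*(3*r-1)/r^2) * (cc t / sg r t)) volume 0 1 := by
    apply ContinuousOn.intervalIntegrable
    rw [Set.uIcc_of_le zero_le_one]
    exact continuousOn_const.mul (contOn_g1 hr)
  have i2 : IntervalIntegrable (fun t => (-2*r) * (cc t / ((t + r^2) * sg r t))) volume 0 1 := by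
    apply ContinuousOn.intervalIntegrable
    rw [Set.uIcc_of_le zero_le_one]
    exact continuousOn_const.mul (contOn_g2 hr)
  rw [intervalIntegral.integral_add i1 i2, intervalIntegral.integral_const_mul,
    intervalIntegral.integral_const_mul, A₁_eq hr, A₂_eq hr]
  field_simp
  ring


theorem stmt_12 (r : ℝ) (hr : 0 < r) :
    HasDerivAt h (-2 * ((3 * r - 1) / r * A₁ r + r * A₂ r)) r := by
  have hD := main_deriv hr
  have heq : h =ᶠ[nhds r] fun x => ∫ t in (0:ℝ)..1, Ff x t := by
    filter_upwards [eventually_gt_nhds hr] with x hx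
    exact h_eq hx
  have H : HasDerivAt h (∫ t in (0:ℝ)..1, Fp r t) r := hD.congr_of_eventuallyEq heq
  have iFp : IntervalIntegrable (fun t => Fp r t) volume 0 1 := by
    apply ContinuousOn.intervalIntegrable
    rw [Set.uIcc_of_le zero_le_one]
    exact contOn_Fp_slice hr
  have iTt : IntervalIntegrable (fun t => Tt r t) volume 0 1 := by
    apply ContinuousOn.intervalIntegrable
    rw [Set.uIcc_of_le zero_le_one]
    exact contOn_Tt hr
  have hsub := intervalIntegral.integral_sub iFp iTt
  have hz := int_diff_zero hr
  have hT := int_Tt hr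
  have hval : (∫ t in (0:ℝ)..1, Fp r t) = -2 * ((3 * r - 1) / r * A₁ r + r * A₂ r) := by
    have : (∫ t in (0:ℝ)..1, Fp r t) - (∫ t in (0:ℝ)..1, Tt r t) = 0 := by
      rw [← hsub]; exact hz
    linarith [hT, this]
  rwa [hval] at H
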